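/- Let P ⊆ 𝒫 be finite, k ≥ 1, and δ ∈ D^P_k(T_nD) (i.e., δ is satisfiable in some reflexive Kripke model). Then for every l ∈ {1,…,k} and every nonempty B ⊆ 𝒜: δ^{↓l} ∈ R_B(δ^{↓(l−1)}) and δ^{↑(l−1)} ∈ R_B(δ^{↑l}). -/

import Mathlib

/-!
Common framework: multi-agent epistemic modal logic with distributed knowledge.
Agents are `Fin n`, atoms are natural numbers.
-/

namespace DKLogic

/-- Formulas of the language `L_D`: atoms, negation, conjunction, disjunction and the
distributed-knowledge modality `D_B` for nonempty sets `B` of agents (together with the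
constants `⊤`/`⊥`, which the paper uses as the empty conjunction/disjunction). -/
inductive Formula (n : ℕ) : Type
  | top : Formula n
  | bot : Formula n
  | atom : ℕ → Formula n
  | neg : Formula n → Formula n
  | and : Formula n → Formula n → Formula n
  | or : Formula n → Formula n → Formula n
  | D : {B : Finset (Fin n) // B.Nonempty} → Formula n → Formula n

namespace Formula

/-- Modal depth of a formula. -/
def depth {n : ℕ} : Formula n → ℕ
  | top => 0
  | bot => 0
  | atom _ => 0
  | neg φ => depth φ
  | and φ ψ => max (depth φ) (depth ψ)
  | or φ ψ => max (depth φ) (depth ψ)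
  | D _ φ => depth φ + 1

/-- The atoms occurring in a formula. -/
def atoms {n : ℕ} : Formula n → Finset ℕ
  | top => ∅
  | bot => ∅
  | atom q => {q}
  | neg φ => atoms φ
  | and φ ψ => atoms φ ∪ atoms ψ
  | or φ ψ => atoms φ ∪ atoms ψ
  | D _ φ => atoms φ

end Formula

/-- A Kripke model over world type `W` with `n` agents. -/
structure KModel (n : ℕ) (W : Type) where
  R : Fin n → W → W → Prop
  V : W → Set ℕ

/-- The distributed accessibility relation `R_B = ⋂_{i ∈ B} R_i`. -/
def KModel.RB {n : ℕ} {W : Type} (M : KModel n W) (B : Finset (Fin n)) (s t : W) : Prop :=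
  ∀ i ∈ B, M.R i s t

/-- Satisfaction. -/
def Sat {n : ℕ} {W : Type} (M : KModel n W) : W → Formula n → Prop
  | _, .top => True
  | _, .bot => False
  | s, .atom q => q ∈ M.V s
  | s, .neg φ => ¬ Sat M s φ
  | s, .and φ ψ => Sat M s φ ∧ Sat M s ψ
  | s, .or φ ψ => Sat M s φ ∨ Sat M s ψ
  | s, .D B φ => ∀ t : W, M.RB B.1 s t → Sat M t φ

/-- Seriality of a relation. -/
def Serial {W : Type} (R : W → W → Prop) : Prop := ∀ x, ∃ y, R x y

/-- Euclideanness of a relation. -/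
def Euclidean {W : Type} (R : W → W → Prop) : Prop := ∀ x y z, R x y → R x z → R y z

/-- The six modal systems. -/
inductive MSys : Type
  | K | D | T | K45 | KD45 | S5

/-- `L`-models: frame conditions on each accessibility relation for each system. -/
def IsModel {n : ℕ} {W : Type} : MSys → KModel n W → Prop
  | .K, _ => True
  | .D, M => ∀ i, Serial (M.R i)
  | .T, M => ∀ i, Reflexive (M.R i)
  | .K45, M => ∀ i, Transitive (M.R i) ∧ Euclidean (M.R i)
  | .KD45, M => ∀ i, Serial (M.R i) ∧ Transitive (M.R i) ∧ Euclidean (M.R i)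
  | .S5, M => ∀ i, Reflexive (M.R i) ∧ Transitive (M.R i) ∧ Euclidean (M.R i)

/-- Semantic consequence over `L`-models. -/
def Entails {n : ℕ} (L : MSys) (φ ψ : Formula n) : Prop :=
  ∀ (W : Type) (M : KModel n W), IsModel L M → ∀ s : W, Sat M s φ → Sat M s ψ

/-- Semantic equivalence over `L`-models. -/
def EquivL {n : ℕ} (L : MSys) (φ ψ : Formula n) : Prop :=
  Entails L φ ψ ∧ Entails L ψ φ

/-- `L`-satisfiability. -/
def SatL {n : ℕ} (L : MSys) (φ : Formula n) : Prop :=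
  ∃ (W : Type) (M : KModel n W) (s : W), IsModel L M ∧ Sat M s φ

/-- Collective `p`-bisimulation between two pointed models. -/
def CollPBisim {n : ℕ} {W W' : Type} (M : KModel n W) (s : W) (M' : KModel n W') (s' : W')
    (p : ℕ) : Prop :=
  ∃ ρ : W → W' → Prop, ρ s s' ∧
    ∀ u u', ρ u u' →
      ((∀ q : ℕ, q ≠ p → (q ∈ M.V u ↔ q ∈ M'.V u')) ∧
       (∀ B : Finset (Fin n), B.Nonempty → ∀ v, M.RB B u v → ∃ v', M'.RB B u' v' ∧ ρ v v') ∧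
       (∀ B : Finset (Fin n), B.Nonempty → ∀ v', M'.RB B u' v' → ∃ v, M.RB B u v ∧ ρ v v'))

/-- `ψ` is a result of forgetting `p` in `φ` in system `L`
(written `dforget_L(φ,p) ≡_L ψ` in the paper). -/
def IsForget {n : ℕ} (L : MSys) (φ : Formula n) (p : ℕ) (ψ : Formula n) : Prop :=
  ψ.atoms ⊆ φ.atoms.erase p ∧
  (∀ (W W' : Type) (M : KModel n W) (M' : KModel n W') (s : W) (s' : W'),
      IsModel L M → IsModel L M' → Sat M s φ → CollPBisim M s M' s' p → Sat M' s' ψ) ∧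
  (∀ (W' : Type) (M' : KModel n W') (s' : W'),
      IsModel L M' → Sat M' s' ψ →
      ∃ (W : Type) (M : KModel n W) (s : W), IsModel L M ∧ Sat M s φ ∧ CollPBisim M s M' s' p)

/-- `L` is closed under forgetting: `dforget_L(φ,p)` exists (as an `L`-satisfiable formula)
for every `L`-satisfiable `φ` and every atom `p`. -/
def ClosedUnderForgetting {n : ℕ} (L : MSys) : Prop :=
  ∀ (φ : Formula n) (p : ℕ), SatL L φ → ∃ ψ : Formula n, SatL L ψ ∧ IsForget L φ p ψ

/-- `ψ` is a uniform interpolant of `φ` in `L` over `P \ {p}`. -/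
def IsUI {n : ℕ} (L : MSys) (P : Finset ℕ) (p : ℕ) (φ ψ : Formula n) : Prop :=
  SatL L ψ ∧ ψ.atoms ⊆ P.erase p ∧
  ∀ χ : Formula n, p ∉ χ.atoms → (Entails L φ χ ↔ Entails L ψ χ)

/-- The uniform interpolation property for the system `L`. -/
def HasUIP {n : ℕ} (L : MSys) : Prop :=
  ∀ (P : Finset ℕ) (p : ℕ) (φ : Formula n),
    p ∈ P → φ.atoms ⊆ P → SatL L φ → ∃ ψ : Formula n, IsUI L P p φ ψ

/-! ### Canonical formulas -/

/-- Big conjunction of a list of formulas (`⊤` for the empty list). -/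
def bigAnd {n : ℕ} : List (Formula n) → Formula n
  | [] => .top
  | φ :: l => .and φ (bigAnd l)

/-- Big disjunction of a list of formulas (`⊥` for the empty list). -/
def bigOr {n : ℕ} : List (Formula n) → Formula n
  | [] => .bot
  | φ :: l => .or φ (bigOr l)

/-- An injective numerical code of formulas, used to fix a canonical ordering. -/
def fcode {n : ℕ} : Formula n → ℕ
  | .top => Nat.pair 0 0
  | .bot => Nat.pair 1 0
  | .atom q => Nat.pair 2 q
  | .neg φ => Nat.pair 3 (fcode φ)
  | .and φ ψ => Nat.pair 4 (Nat.pair (fcode φ) (fcode ψ))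
  | .or φ ψ => Nat.pair 5 (Nat.pair (fcode φ) (fcode ψ))
  | .D B φ => Nat.pair 6 (Nat.pair (B.1.sum fun i => 2 ^ (i : ℕ)) (fcode φ))

/-- Insert a formula into a strictly `fcode`-sorted list (dropping duplicates). -/
def insertF {n : ℕ} (φ : Formula n) : List (Formula n) → List (Formula n)
  | [] => [φ]
  | ψ :: l =>
      if fcode φ < fcode ψ then φ :: ψ :: l
      else if fcode φ = fcode ψ then ψ :: l
      else ψ :: insertF φ l

/-- The canonical (sorted, duplicate-free) list representing the set of formulas in `l`. -/
def normList {n : ℕ} (l : List (Formula n)) : List (Formula n) := l.foldr insertF []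

/-- The minterm of `P` that is positive exactly on `S`. -/
def minterm {n : ℕ} (P S : Finset ℕ) : Formula n :=
  bigAnd ((P.sort (· ≤ ·)).map fun q =>
    if q ∈ S then Formula.atom q else Formula.neg (Formula.atom q))

/-- The subset of `Fin n` whose characteristic bits are those of `m`. -/
def natToFinset (n m : ℕ) : Finset (Fin n) :=
  Finset.univ.filter fun i => m.testBit (i : ℕ)

/-- A canonical enumeration of all nonempty subsets of the agent set. -/
def neSubsets (n : ℕ) : List {B : Finset (Fin n) // B.Nonempty} :=
  ((List.range (2 ^ n)).map (natToFinset n)).filterMap fun B =>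
    if h : B.Nonempty then some ⟨B, h⟩ else none

/-- `∇_B Φ = D_B (⋁Φ) ∧ ⋀_{φ ∈ Φ} ¬ D_B ¬ φ`. -/
def nabla {n : ℕ} (B : {B : Finset (Fin n) // B.Nonempty}) (Φ : List (Formula n)) : Formula n :=
  Formula.and (Formula.D B (bigOr Φ))
    (bigAnd (Φ.map fun φ => Formula.neg (Formula.D B (Formula.neg φ))))

/-- Underlying data of a d-canonical formula: a set of (positive) atoms together with,
for every set `B` of agents, a list of successor data. -/
inductive CData (n : ℕ) : Type
  | mk (S : Finset ℕ) (succ : Finset (Fin n) → List (CData n)) : CData n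

/-- The positive-atom component. -/
def CData.S {n : ℕ} : CData n → Finset ℕ
  | mk S _ => S

/-- The `B`-successor data. -/
def CData.succ {n : ℕ} : CData n → Finset (Fin n) → List (CData n)
  | mk _ f => f

/-- The d-canonical formula of depth `k` over `P` determined by the data `d`:
`δ_0 ∧ ⋀_{B} ∇_B Φ_B`. -/
def toFormula {n : ℕ} (P : Finset ℕ) : ℕ → CData n → Formula n
  | 0, d => minterm P (d.S ∩ P)
  | (k+1), d =>
      Formula.and (minterm P (d.S ∩ P))
        (bigAnd ((neSubsets n).map fun B =>
          nabla B (normList ((d.succ B.1).map fun c => toFormula P k c))))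

/-- `D^P_k`: the set of d-canonical formulas of depth `k` over `P`. -/
def DP {n : ℕ} (P : Finset ℕ) (k : ℕ) : Set (Formula n) := Set.range (toFormula P k)

/-- `R_B(δ)` for `δ` the level-`k` canonical formula with data `d`:
the set of `B`-successor canonical formulas (of level `k - 1`). -/
def RBset {n : ℕ} (P : Finset ℕ) (k : ℕ) (d : CData n) (B : Finset (Fin n)) :
    Set (Formula n) :=
  {φ | ∃ c ∈ d.succ B, φ = toFormula P (k - 1) c}

/-- One pruning step `δ ↦ δ^↓` on data (first argument: the level of the input). -/
def downD {n : ℕ} : ℕ → CData n → CData n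
  | 0, d => d
  | 1, d => CData.mk d.S (fun _ => [])
  | (k+2), d => CData.mk d.S (fun B => (d.succ B).map fun c => downD (k+1) c)

/-- `l`-fold pruning `δ ↦ δ^{↓l}` on data (first argument: the level of the input). -/
def downIter {n : ℕ} : ℕ → ℕ → CData n → CData n
  | _, 0, d => d
  | k, (l+1), d => downIter (k-1) l (downD k d)

/-- Truncation `δ ↦ δ^{↑l}` on data (first argument: the level of the input). -/
def upD {n : ℕ} : ℕ → ℕ → CData n → CData n
  | _, 0, d => CData.mk d.S (fun _ => [])
  | 0, (_+1), d => d
  | (k+1), (l+1), d => CData.mk d.S (fun B => (d.succ B).map fun c => upD k l c)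

/-- The canonical formula `δ` of level `k` with data `d`. -/
def cf {n : ℕ} (P : Finset ℕ) (k : ℕ) (d : CData n) : Formula n := toFormula P k d

/-- `δ^{↓l}` (a canonical formula of level `k - l`). -/
def cfDown {n : ℕ} (P : Finset ℕ) (k l : ℕ) (d : CData n) : Formula n :=
  toFormula P (k - l) (downIter k l d)

/-- `δ^{↑l}` (a canonical formula of level `min k l`). -/
def cfUp {n : ℕ} (P : Finset ℕ) (k l : ℕ) (d : CData n) : Formula n :=
  toFormula P (min k l) (upD k l d)

/-- Literal elimination: `φ^p` replaces every occurrence of `¬p` by `⊤` and subsequently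
every remaining occurrence of `p` by `⊤`. -/
def elim {n : ℕ} (p : ℕ) : Formula n → Formula n
  | .top => .top
  | .bot => .bot
  | .atom q => if q = p then .top else .atom q
  | .neg (.atom q) => if q = p then .top else .neg (.atom q)
  | .neg φ => .neg (elim p φ)
  | .and φ ψ => .and (elim p φ) (elim p ψ)
  | .or φ ψ => .or (elim p φ) (elim p ψ)
  | .D B φ => .D B (elim p φ)



/-! ### Auxiliary lemmas for Statement 10 -/

section Aux

lemma sum_two_pow_range (a : ℕ) : ∑ i ∈ Finset.range a, 2^i = 2^a - 1 := by
  induction a with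
  | zero => simp
  | succ a ih =>
    rw [Finset.sum_range_succ, ih]
    have h1 : 1 ≤ 2^a := Nat.one_le_two_pow
    have h2 : 2^(a+1) = 2^a * 2 := pow_succ 2 a
    omega

lemma testBit_sum_two_pow (s : Finset ℕ) (j : ℕ) :
    (∑ i ∈ s, 2^i).testBit j = true ↔ j ∈ s := by
  induction s using Finset.induction_on_max with
  | empty => simp [Nat.zero_testBit]
  | insert a s ha ih =>
    have hs : ∑ i ∈ s, 2^i < 2^a := by
      have hsub : s ⊆ Finset.range a := fun b hb => Finset.mem_range.2 (ha b hb)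
      have h1 : 1 ≤ 2^a := Nat.one_le_two_pow
      have h4 : (∑ i ∈ s, 2^i) ≤ ∑ i ∈ Finset.range a, 2^i :=
        Finset.sum_le_sum_of_subset hsub
      rw [sum_two_pow_range] at h4
      omega
    rw [Finset.sum_insert (fun h => lt_irrefl a (ha a h))]
    rcases lt_trichotomy j a with h | h | h
    · rw [Nat.testBit_two_pow_add_gt h, ih]
      simp only [Finset.mem_insert]
      constructor
      · exact Or.inr
      · rintro (rfl | hj)
        · omega
        · exact hj
    · subst h
      rw [Nat.testBit_two_pow_add_eq, Nat.testBit_lt_two_pow hs]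
      simp
    · have h2 : 2^(a+1) ≤ 2^j := Nat.pow_le_pow_right (by norm_num) h
      have h3 : 2^(a+1) = 2^a * 2 := pow_succ 2 a
      have hlt : 2^a + ∑ i ∈ s, 2^i < 2^j := by omega
      rw [Nat.testBit_lt_two_pow hlt]
      simp only [Bool.false_eq_true, false_iff, Finset.mem_insert]
      push_neg
      refine ⟨by omega, fun hj => ?_⟩
      have := ha j hj; omega

variable {n : ℕ}

lemma sum_image_val (B : Finset (Fin n)) :
    (B.sum fun i => 2 ^ (i : ℕ)) = ∑ x ∈ B.image Fin.val, 2^x :=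
  (Finset.sum_image (fun x _ y _ h => Fin.val_injective h)).symm

lemma testBit_code (B : Finset (Fin n)) (j : ℕ) :
    (B.sum fun i => 2 ^ (i : ℕ)).testBit j = true ↔ ∃ i ∈ B, (i : ℕ) = j := by
  rw [sum_image_val, testBit_sum_two_pow]
  simp [Finset.mem_image]

lemma natToFinset_code (B : Finset (Fin n)) :
    natToFinset n (B.sum fun i => 2 ^ (i : ℕ)) = B := by
  ext i
  simp only [natToFinset, Finset.mem_filter, Finset.mem_univ, true_and]
  rw [testBit_code]
  constructor
  · rintro ⟨i', hi', h⟩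
    rwa [← Fin.val_injective h]
  · exact fun h => ⟨i, h, rfl⟩

lemma code_lt (B : Finset (Fin n)) : (B.sum fun i => 2 ^ (i : ℕ)) < 2^n := by
  rw [sum_image_val]
  have hsub : B.image Fin.val ⊆ Finset.range n := by
    intro x hx
    obtain ⟨i, _, rfl⟩ := Finset.mem_image.1 hx
    exact Finset.mem_range.2 i.isLt
  have h4 : (∑ x ∈ B.image Fin.val, 2^x) ≤ ∑ i ∈ Finset.range n, 2^i :=
    Finset.sum_le_sum_of_subset hsub
  have h1 : 1 ≤ 2^n := Nat.one_le_two_pow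
  rw [sum_two_pow_range] at h4
  omega

lemma mem_neSubsets (B : Finset (Fin n)) (hB : B.Nonempty) :
    (⟨B, hB⟩ : {B : Finset (Fin n) // B.Nonempty}) ∈ neSubsets n := by
  rw [neSubsets, List.mem_filterMap]
  refine ⟨B, ?_, ?_⟩
  · rw [List.mem_map]
    exact ⟨B.sum fun i => 2 ^ (i : ℕ), List.mem_range.2 (code_lt B), natToFinset_code B⟩
  · rw [dif_pos hB]

lemma sum_pow_inj {B C : Finset (Fin n)}
    (h : (B.sum fun i => (2:ℕ) ^ (i : ℕ)) = C.sum fun i => 2 ^ (i : ℕ)) : B = C := by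
  rw [← natToFinset_code B, ← natToFinset_code C, h]

lemma fcode_inj : ∀ φ ψ : Formula n, fcode φ = fcode ψ → φ = ψ := by
  intro φ
  induction φ with
  | top => intro ψ h; cases ψ <;> first | rfl | simp [fcode, Nat.pair_eq_pair] at h
  | bot => intro ψ h; cases ψ <;> first | rfl | simp [fcode, Nat.pair_eq_pair] at h
  | atom q =>
    intro ψ h; cases ψ <;> simp [fcode, Nat.pair_eq_pair] at h
    rw [h]
  | neg φ ih =>
    intro ψ h; cases ψ <;> simp [fcode, Nat.pair_eq_pair] at h
    rw [ih _ h]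
  | and φ₁ φ₂ ih1 ih2 =>
    intro ψ h; cases ψ <;> simp [fcode, Nat.pair_eq_pair] at h
    rw [ih1 _ h.1, ih2 _ h.2]
  | or φ₁ φ₂ ih1 ih2 =>
    intro ψ h; cases ψ <;> simp [fcode, Nat.pair_eq_pair] at h
    rw [ih1 _ h.1, ih2 _ h.2]
  | D B φ ih =>
    intro ψ h; cases ψ <;> simp [fcode, Nat.pair_eq_pair] at h
    rw [Subtype.ext (sum_pow_inj h.1), ih _ h.2]

/-- Strict `fcode` order on formulas. -/
def rlt (a b : Formula n) : Prop := fcode a < fcode b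

instance : IsIrrefl (Formula n) rlt := ⟨fun _ h => lt_irrefl _ h⟩
instance : IsAntisymm (Formula n) rlt :=
  ⟨fun _ _ h h' => absurd (lt_trans h h') (lt_irrefl _)⟩

lemma mem_insertF {φ x : Formula n} :
    ∀ {l : List (Formula n)}, x ∈ insertF φ l ↔ x = φ ∨ x ∈ l := by
  intro l
  induction l with
  | nil => simp [insertF]
  | cons ψ l ih =>
    by_cases h1 : fcode φ < fcode ψ
    · simp [insertF, h1]
    · by_cases h2 : fcode φ = fcode ψ
      · have hφψ : φ = ψ := fcode_inj _ _ h2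
        subst hφψ
        simp only [insertF]
        rw [if_neg h1]; rw [if_pos (by trivial), List.mem_cons]
        tauto
      · simp only [insertF, h1, if_false, h2, List.mem_cons, ih]
        tauto

lemma sorted_insertF {φ : Formula n} :
    ∀ {l : List (Formula n)}, List.Pairwise rlt l → List.Pairwise rlt (insertF φ l) := by
  intro l
  induction l with
  | nil => intro _; simp [insertF]
  | cons ψ l ih =>
    intro h
    rw [List.pairwise_cons] at h
    by_cases h1 : fcode φ < fcode ψ
    · rw [show insertF φ (ψ :: l) = φ :: ψ :: l by simp [insertF, h1]]
      rw [List.pairwise_cons]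
      refine ⟨?_, List.pairwise_cons.2 h⟩
      intro b hb
      rcases List.mem_cons.1 hb with rfl | hb
      · exact h1
      · exact lt_trans h1 (h.1 b hb)
    · by_cases h2 : fcode φ = fcode ψ
      · rw [show insertF φ (ψ :: l) = ψ :: l by simp [insertF, h1, h2]]
        exact List.pairwise_cons.2 h
      · rw [show insertF φ (ψ :: l) = ψ :: insertF φ l by simp [insertF, h1, h2]]
        rw [List.pairwise_cons]
        refine ⟨?_, ih h.2⟩
        intro b hb
        rcases mem_insertF.1 hb with rfl | hb
        · exact lt_of_le_of_ne (not_lt.1 h1) (Ne.symm h2)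
        · exact h.1 b hb

lemma sorted_normList (l : List (Formula n)) : List.Pairwise rlt (normList l) := by
  induction l with
  | nil => simp [normList]
  | cons φ l ih => exact sorted_insertF ih

lemma mem_normList {x : Formula n} :
    ∀ {l : List (Formula n)}, x ∈ normList l ↔ x ∈ l := by
  intro l
  induction l with
  | nil => simp [normList]
  | cons φ l ih =>
    show x ∈ insertF φ (normList l) ↔ _
    rw [mem_insertF, ih, List.mem_cons]

lemma normList_ext {l l' : List (Formula n)} (h : ∀ x, x ∈ l ↔ x ∈ l') :
    normList l = normList l' := by
  have nd : (normList l).Nodup := (sorted_normList l).nodup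
  have nd' : (normList l').Nodup := (sorted_normList l').nodup
  refine List.Perm.eq_of_pairwise' (sorted_normList l) (sorted_normList l') ?_
  exact (List.perm_ext_iff_of_nodup nd nd').2
    (fun a => by rw [mem_normList, mem_normList]; exact h a)

variable {W : Type} {M : KModel n W} {s : W}

lemma sat_bigAnd : ∀ {l : List (Formula n)},
    Sat M s (bigAnd l) ↔ ∀ φ ∈ l, Sat M s φ := by
  intro l
  induction l with
  | nil => simp [bigAnd, Sat]
  | cons φ l ih =>
    show Sat M s (.and φ (bigAnd l)) ↔ _
    rw [show Sat M s (.and φ (bigAnd l)) ↔ (Sat M s φ ∧ Sat M s (bigAnd l)) from Iff.rfl, ih]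
    simp

lemma sat_bigOr : ∀ {l : List (Formula n)},
    Sat M s (bigOr l) ↔ ∃ φ ∈ l, Sat M s φ := by
  intro l
  induction l with
  | nil => simp [bigOr, Sat]
  | cons φ l ih =>
    show Sat M s (.or φ (bigOr l)) ↔ _
    rw [show Sat M s (.or φ (bigOr l)) ↔ (Sat M s φ ∨ Sat M s (bigOr l)) from Iff.rfl, ih]
    simp

lemma sat_minterm {P S : Finset ℕ} :
    Sat M s (minterm (n := n) P S) ↔ ∀ q ∈ P, (q ∈ S ↔ q ∈ M.V s) := by
  rw [minterm, sat_bigAnd]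
  constructor
  · intro h q hq
    have := h _ (List.mem_map_of_mem ((Finset.mem_sort _).2 hq))
    by_cases hqS : q ∈ S
    · rw [if_pos hqS] at this
      exact ⟨fun _ => this, fun _ => hqS⟩
    · rw [if_neg hqS] at this
      exact ⟨fun h' => absurd h' hqS, fun h' => absurd h' this⟩
  · intro h φ hφ
    rw [List.mem_map] at hφ
    obtain ⟨q, hq, rfl⟩ := hφ
    have hqP : q ∈ P := (Finset.mem_sort _).1 hq
    by_cases hqS : q ∈ S
    · rw [if_pos hqS]
      exact (h q hqP).1 hqS
    · rw [if_neg hqS]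
      exact fun hv => hqS ((h q hqP).2 hv)

lemma sat_nabla {B : {B : Finset (Fin n) // B.Nonempty}} {Φ : List (Formula n)} :
    Sat M s (nabla B Φ) ↔
      ((∀ t, M.RB B.1 s t → ∃ φ ∈ Φ, Sat M t φ) ∧
        ∀ φ ∈ Φ, ∃ t, M.RB B.1 s t ∧ Sat M t φ) := by
  rw [nabla]
  rw [show Sat M s (.and (Formula.D B (bigOr Φ))
      (bigAnd (Φ.map fun φ => Formula.neg (Formula.D B (Formula.neg φ))))) ↔
      (Sat M s (Formula.D B (bigOr Φ)) ∧
        Sat M s (bigAnd (Φ.map fun φ => Formula.neg (Formula.D B (Formula.neg φ)))))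
      from Iff.rfl]
  rw [sat_bigAnd]
  constructor
  · rintro ⟨h1, h2⟩
    refine ⟨fun t ht => sat_bigOr.1 (h1 t ht), fun φ hφ => ?_⟩
    have := h2 _ (List.mem_map_of_mem hφ)
    rw [show Sat M s (Formula.neg (Formula.D B (Formula.neg φ))) ↔
        ¬ Sat M s (Formula.D B (Formula.neg φ)) from Iff.rfl] at this
    by_contra hc
    push_neg at hc
    exact this (fun t ht hsat => hc t ht hsat)
  · rintro ⟨h1, h2⟩
    refine ⟨fun t ht => sat_bigOr.2 (h1 t ht), fun ψ hψ => ?_⟩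
    rw [List.mem_map] at hψ
    obtain ⟨φ, hφ, rfl⟩ := hψ
    obtain ⟨t, ht, hsat⟩ := h2 φ hφ
    intro hall
    exact hall t ht hsat

lemma sat_succ_nabla {P : Finset ℕ} {j : ℕ} {c : CData n}
    (h : Sat M s (toFormula P (j+1) c)) (B : {B : Finset (Fin n) // B.Nonempty}) :
    Sat M s (nabla B (normList ((c.succ B.1).map (toFormula P j)))) := by
  have h2 : Sat M s (bigAnd ((neSubsets n).map fun B =>
      nabla B (normList ((c.succ B.1).map fun c' => toFormula P j c')))) := h.2
  exact (sat_bigAnd.1 h2) _ (List.mem_map_of_mem (mem_neSubsets B.1 B.2))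

lemma unique (P : Finset ℕ) : ∀ (j : ℕ) {W : Type} (M : KModel n W) (s : W)
    (c c' : CData n), Sat M s (toFormula P j c) → Sat M s (toFormula P j c') →
    toFormula P j c = toFormula P j c' := by
  intro j
  induction j with
  | zero =>
    intro W M s c c' h h'
    have h1 := sat_minterm.1 h
    have h2 := sat_minterm.1 h'
    show minterm P (c.S ∩ P) = minterm P (c'.S ∩ P)
    have hS : c.S ∩ P = c'.S ∩ P := by
      ext q
      by_cases hq : q ∈ P
      · rw [h1 q hq, h2 q hq]
      · simp [hq]
    rw [hS]
  | succ j ih =>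
    intro W M s c c' h h'
    have hm : minterm (n := n) P (c.S ∩ P) = minterm P (c'.S ∩ P) := by
      have h1 := sat_minterm.1 (h.1 : Sat M s (minterm P (c.S ∩ P)))
      have h2 := sat_minterm.1 (h'.1 : Sat M s (minterm P (c'.S ∩ P)))
      have hS : c.S ∩ P = c'.S ∩ P := by
        ext q
        by_cases hq : q ∈ P
        · rw [h1 q hq, h2 q hq]
        · simp [hq]
      rw [hS]
    show Formula.and _ _ = Formula.and _ _
    rw [hm]
    congr 1
    congr 1
    apply List.map_congr_left
    intro B _
    congr 1
    apply normList_ext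
    intro φ
    have hnab := sat_succ_nabla h B
    have hnab' := sat_succ_nabla h' B
    constructor
    · intro hφ
      rw [List.mem_map] at hφ
      obtain ⟨c₀, hc₀, rfl⟩ := hφ
      have hmem : toFormula P j c₀ ∈ normList ((c.succ B.1).map (toFormula P j)) := by
        rw [mem_normList, List.mem_map]; exact ⟨c₀, hc₀, rfl⟩
      obtain ⟨t, ht, hsat⟩ := (sat_nabla.1 hnab).2 _ hmem
      obtain ⟨φ', hφ', hsat'⟩ := (sat_nabla.1 hnab').1 t ht
      rw [mem_normList, List.mem_map] at hφ'
      obtain ⟨c₀', hc₀', rfl⟩ := hφ'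
      rw [List.mem_map]
      exact ⟨c₀', hc₀', (ih M t c₀' c₀ hsat' hsat).symm ▸ rfl⟩
    · intro hφ
      rw [List.mem_map] at hφ
      obtain ⟨c₀', hc₀', rfl⟩ := hφ
      have hmem : toFormula P j c₀' ∈ normList ((c'.succ B.1).map (toFormula P j)) := by
        rw [mem_normList, List.mem_map]; exact ⟨c₀', hc₀', rfl⟩
      obtain ⟨t, ht, hsat⟩ := (sat_nabla.1 hnab').2 _ hmem
      obtain ⟨φ', hφ', hsat'⟩ := (sat_nabla.1 hnab).1 t ht
      rw [mem_normList, List.mem_map] at hφ'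
      obtain ⟨c₀, hc₀, rfl⟩ := hφ'
      rw [List.mem_map]
      exact ⟨c₀, hc₀, (ih M t c₀ c₀' hsat' hsat).symm ▸ rfl⟩

lemma sat_down (P : Finset ℕ) : ∀ (j : ℕ) {W : Type} (M : KModel n W) (s : W)
    (c : CData n), Sat M s (toFormula P j c) → Sat M s (toFormula P (j-1) (downD j c)) := by
  intro j
  induction j with
  | zero => intro W M s c h; exact h
  | succ j ih =>
    cases j with
    | zero =>
      intro W M s c h
      exact h.1
    | succ m =>
      intro W M s c h
      refine ⟨h.1, ?_⟩
      apply sat_bigAnd.2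
      intro ψ hψ
      rw [List.mem_map] at hψ
      obtain ⟨B, _, rfl⟩ := hψ
      have hnab := sat_succ_nabla h B
      apply sat_nabla.2
      constructor
      · intro t ht
        obtain ⟨φ, hφ, hsatφ⟩ := (sat_nabla.1 hnab).1 t ht
        rw [mem_normList, List.mem_map] at hφ
        obtain ⟨c₀, hc₀, rfl⟩ := hφ
        refine ⟨toFormula P m (downD (m+1) c₀), ?_, ih M t c₀ hsatφ⟩
        rw [mem_normList, List.mem_map]
        exact ⟨downD (m+1) c₀, List.mem_map_of_mem hc₀, rfl⟩
      · intro φ hφ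
        rw [mem_normList, List.mem_map] at hφ
        obtain ⟨c₁, hc₁, rfl⟩ := hφ
        have hc₁' : c₁ ∈ (c.succ B.1).map (downD (m+1)) := hc₁
        rw [List.mem_map] at hc₁'
        obtain ⟨c₀, hc₀, rfl⟩ := hc₁'
        obtain ⟨t, ht, hsat⟩ := (sat_nabla.1 hnab).2 (toFormula P (m+1) c₀)
          (by rw [mem_normList, List.mem_map]; exact ⟨c₀, hc₀, rfl⟩)
        exact ⟨t, ht, ih M t c₀ hsat⟩

lemma sat_up (P : Finset ℕ) : ∀ (j m : ℕ) {W : Type} (M : KModel n W) (s : W)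
    (c : CData n), Sat M s (toFormula P j c) →
    Sat M s (toFormula P (min j m) (upD j m c)) := by
  intro j
  induction j with
  | zero =>
    intro m W M s c h
    cases m with
    | zero => exact h
    | succ m => exact h
  | succ j ih =>
    intro m W M s c h
    cases m with
    | zero =>
      rw [Nat.min_zero]
      exact h.1
    | succ m =>
      rw [Nat.succ_min_succ]
      refine ⟨h.1, ?_⟩
      apply sat_bigAnd.2
      intro ψ hψ
      rw [List.mem_map] at hψ
      obtain ⟨B, _, rfl⟩ := hψ
      have hnab := sat_succ_nabla h B
      apply sat_nabla.2
      constructor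
      · intro t ht
        obtain ⟨φ, hφ, hsatφ⟩ := (sat_nabla.1 hnab).1 t ht
        rw [mem_normList, List.mem_map] at hφ
        obtain ⟨c₀, hc₀, rfl⟩ := hφ
        refine ⟨toFormula P (min j m) (upD j m c₀), ?_, ih m M t c₀ hsatφ⟩
        rw [mem_normList, List.mem_map]
        exact ⟨upD j m c₀, List.mem_map_of_mem hc₀, rfl⟩
      · intro φ hφ
        rw [mem_normList, List.mem_map] at hφ
        obtain ⟨c₁, hc₁, rfl⟩ := hφ
        have hc₁' : c₁ ∈ (c.succ B.1).map (upD j m) := hc₁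
        rw [List.mem_map] at hc₁'
        obtain ⟨c₀, hc₀, rfl⟩ := hc₁'
        obtain ⟨t, ht, hsat⟩ := (sat_nabla.1 hnab).2 (toFormula P j c₀)
          (by rw [mem_normList, List.mem_map]; exact ⟨c₀, hc₀, rfl⟩)
        exact ⟨t, ht, ih m M t c₀ hsat⟩

lemma downIter_succ : ∀ (l k : ℕ) (d : CData n),
    downIter k (l+1) d = downD (k-l) (downIter k l d) := by
  intro l
  induction l with
  | zero => intro k d; rfl
  | succ l ih =>
    intro k d
    show downIter (k-1) (l+1) (downD k d) = _
    rw [ih]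
    have h : k - 1 - l = k - (l+1) := by omega
    rw [h]
    rfl

lemma sat_downIter (P : Finset ℕ) : ∀ (l k : ℕ) {W : Type} (M : KModel n W) (s : W)
    (d : CData n), Sat M s (toFormula P k d) →
    Sat M s (toFormula P (k-l) (downIter k l d)) := by
  intro l
  induction l with
  | zero => intro k W M s d h; exact h
  | succ l ih =>
    intro k W M s d h
    have h1 := sat_down P k M s d h
    have h2 := ih (k-1) M s (downD k d) h1
    have heq : k - (l+1) = (k-1) - l := by omega
    rw [show downIter k (l+1) d = downIter (k-1) l (downD k d) from rfl, heq]
    exact h2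

end Aux

/-- reflexivity lemma: for `T_n D`-satisfiable canonical formulas,
`δ^{↓l} ∈ R_B(δ^{↓(l−1)})` and `δ^{↑(l−1)} ∈ R_B(δ^{↑l})`. -/
theorem reflexive_successors {n : ℕ} (P : Finset ℕ) (k : ℕ) (hk : 1 ≤ k)
    (d : CData n) (hsat : SatL MSys.T (cf P k d))
    (l : ℕ) (hl1 : 1 ≤ l) (hlk : l ≤ k)
    (B : Finset (Fin n)) (hB : B.Nonempty) :
    cfDown P k l d ∈ RBset P (k - (l - 1)) (downIter k (l - 1) d) B ∧
    cfUp P k (l - 1) d ∈ RBset P l (upD k l d) B := by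
  obtain ⟨W, M, s, hM, hs⟩ := hsat
  have hrefl : ∀ B' : Finset (Fin n), M.RB B' s s := fun B' i _ => hM i s
  obtain ⟨l', rfl⟩ : ∃ l', l = l' + 1 := ⟨l - 1, by omega⟩
  constructor
  · -- δ^{↓l} ∈ R_B(δ^{↓(l-1)})
    obtain ⟨m', hm'⟩ : ∃ m', k - l' = m' + 1 := ⟨k - l' - 1, by omega⟩
    have he : Sat M s (toFormula P (k - l') (downIter k l' d)) :=
      sat_downIter P l' k M s d hs
    rw [hm'] at he
    have hnab := sat_succ_nabla he ⟨B, hB⟩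
    obtain ⟨φ, hφ, hsφ⟩ := (sat_nabla.1 hnab).1 s (hrefl B)
    rw [mem_normList, List.mem_map] at hφ
    obtain ⟨c, hc, rfl⟩ := hφ
    have hdown' : Sat M s (toFormula P m' (downD (m'+1) (downIter k l' d))) := by
      have := sat_down P (m'+1) M s (downIter k l' d) he
      exact this
    have hequ : toFormula P m' (downD (m'+1) (downIter k l' d)) = toFormula P m' c :=
      unique P m' M s _ _ hdown' hsφ
    refine ⟨c, hc, ?_⟩
    have h1 : k - (l'+1) = m' := by omega
    have h2 : k - l' - 1 = m' := by omega
    calc cfDown P k (l'+1) d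
        = toFormula P (k - (l'+1)) (downIter k (l'+1) d) := rfl
      _ = toFormula P m' (downD (m'+1) (downIter k l' d)) := by
          rw [downIter_succ, hm', h1]
      _ = toFormula P m' c := hequ
      _ = toFormula P (k - l' - 1) c := by rw [h2]
  · -- δ^{↑(l-1)} ∈ R_B(δ^{↑l})
    obtain ⟨k'', rfl⟩ : ∃ k'', k = k'' + 1 := ⟨k - 1, by omega⟩
    have hl'k : l' ≤ k'' := by omega
    have hs' : Sat M s (toFormula P (k''+1) d) := hs
    have hnab := sat_succ_nabla hs' ⟨B, hB⟩
    obtain ⟨φ, hφ, hsφ⟩ := (sat_nabla.1 hnab).1 s (hrefl B)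
    rw [mem_normList, List.mem_map] at hφ
    obtain ⟨c₀, hc₀, rfl⟩ := hφ
    have hupc := sat_up P k'' l' M s c₀ hsφ
    have hupd := sat_up P (k''+1) l' M s d hs'
    have e1 : min k'' l' = l' := min_eq_right hl'k
    have e2 : min (k''+1) l' = l' := min_eq_right (by omega)
    rw [e1] at hupc
    rw [e2] at hupd
    have hequ : toFormula P l' (upD (k''+1) l' d) = toFormula P l' (upD k'' l' c₀) :=
      unique P l' M s _ _ hupd hupc
    refine ⟨upD k'' l' c₀, List.mem_map_of_mem hc₀, ?_⟩
    calc cfUp P (k''+1) (l'+1-1) d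
        = toFormula P (min (k''+1) l') (upD (k''+1) l' d) := rfl
      _ = toFormula P l' (upD (k''+1) l' d) := by rw [e2]
      _ = toFormula P l' (upD k'' l' c₀) := hequ
      _ = toFormula P (l'+1-1) (upD k'' l' c₀) := rfl


end DKLogic
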